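/- Let (W_n)_{n≥0} be an odometer based construction sequence with limit K which has the small word property with respect to a sequence (δ_n)_{n≥0} of reals with 0 < δ_n < 1 for all n (i.e. f_n < δ_n for all n). Then for every shift-invariant Borel probability measure ρ on K, every n, every w ∈ W_n and every w' ∈ W_{n+1}: ρ(⟨w'⟩) < δ_{n+1}/K_{n+1} < ρ(⟨w⟩). -/

import Mathlib

open MeasureTheory

namespace OdoPaper

/-- The shift map `sh` on bi-infinite sequences: `(sh x)(n) = x(n+1)`. -/
def shift {σ : Type*} (x : ℤ → σ) : ℤ → σ := fun m => x (m + 1)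

/-- The `n`-th iterate (`n : ℤ`) of the shift map: `(shiftZ n x)(m) = x(m+n)`. -/
def shiftZ {σ : Type*} (n : ℤ) (x : ℤ → σ) : ℤ → σ := fun m => x (m + n)

/-- `Kseq k n = K_n`, where `K_0 = 1` and `K_{n+1} = K_n * k_n`. -/
def Kseq (k : ℕ → ℕ) : ℕ → ℕ
  | 0 => 1
  | n + 1 => Kseq k n * k n

/-- `w` occurs as a contiguous subword of `l` starting at position `p`. -/
def occursAt {σ : Type*} (w l : List σ) (p : ℕ) : Prop :=
  p + w.length ≤ l.length ∧ (l.drop p).take w.length = w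

/-- The finite contiguous subword `x↾[a, a+m)` of `x : ℤ → σ`. -/
def subwordAt {σ : Type*} (x : ℤ → σ) (a : ℤ) (m : ℕ) : List σ :=
  List.ofFn (fun i : Fin m => x (a + i))

/-- The limit `K` of a construction sequence: all bi-infinite sequences each of whose finite
contiguous subwords occurs as a contiguous subword of some word in some `W n`. -/
def CSLimit {σ : Type*} (W : ℕ → Set (List σ)) : Set (ℤ → σ) :=
  { x | ∀ (a : ℤ) (m : ℕ), ∃ n, ∃ w ∈ W n, ∃ p, occursAt (subwordAt x a m) w p }

/-- `(W_n)` is an odometer based construction sequence over the finite alphabet `σ` with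
coefficient sequence `k`:  `W 0` consists of the one-letter words; every word of `W n` has
length `K_n`; every word of `W (n+1)` is a concatenation of `k n` words from `W n`; each
`W n` is uniquely readable; and every `n`-word occurs in every `(n+1)`-word. -/
structure OdometerBasedCS (σ : Type*) [Fintype σ] (k : ℕ → ℕ) (W : ℕ → Set (List σ)) :
    Prop where
  two_le : ∀ n, 2 ≤ k n
  w_zero : W 0 = { l : List σ | ∃ a : σ, l = [a] }
  nonempty : ∀ n, (W n).Nonempty
  finite : ∀ n, (W n).Finite
  length_eq : ∀ n, ∀ w ∈ W n, w.length = Kseq k n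
  concat : ∀ n, ∀ w' ∈ W (n + 1),
    ∃ g : Fin (k n) → List σ, (∀ i, g i ∈ W n) ∧ w' = (List.ofFn g).flatten
  unique_readable : ∀ n, ∀ u ∈ W n, ∀ v ∈ W n, ∀ w ∈ W n, ∀ p,
    occursAt w (u ++ v) p → p = 0 ∨ p = Kseq k n
  subword : ∀ n, ∀ w ∈ W n, ∀ w' ∈ W (n + 1), ∃ p, occursAt w w' p

/-- The number of occurrences of `w` as a contiguous subword of `l`. -/
noncomputable def occCount {σ : Type*} (w l : List σ) : ℕ :=
  Nat.card { p : ℕ // occursAt w l p }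

/-- `Freq k n m w w'` : the number of occurrences of the `n`-word `w` in the `m`-word `w'`
divided by `K_m / K_n`. -/
noncomputable def Freq {σ : Type*} (k : ℕ → ℕ) (n m : ℕ) (w w' : List σ) : ℝ :=
  (occCount w w' : ℝ) / ((Kseq k m : ℝ) / (Kseq k n : ℝ))

/-- `f_n` : the maximal frequency of `n`-words in `(n+1)`-words. -/
noncomputable def maxFreq {σ : Type*} (k : ℕ → ℕ) (W : ℕ → Set (List σ)) (n : ℕ) : ℝ :=
  sSup { r : ℝ | ∃ w ∈ W n, ∃ w' ∈ W (n + 1), r = Freq k n (n + 1) w w' }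

/-- The cylinder `⟨w⟩` determined by an `n`-word `w`: those `x` in the limit `K` whose
parsing into `n`-words has offset `a = 0` and whose principal `n`-subword `x↾[0,K_n)` is `w`. -/
def cylinder {σ : Type*} (W : ℕ → Set (List σ)) (k : ℕ → ℕ) (n : ℕ) (w : List σ) :
    Set (ℤ → σ) :=
  { x | x ∈ CSLimit W ∧ (∀ j : ℤ, subwordAt x (j * (Kseq k n : ℤ)) (Kseq k n) ∈ W n) ∧
        subwordAt x 0 (Kseq k n) = w }

section Aux
variable {σ : Type*}

@[simp] lemma subwordAt_length (x : ℤ → σ) (a : ℤ) (m : ℕ) : (subwordAt x a m).length = m := by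
  simp [subwordAt]

lemma subwordAt_getElem (x : ℤ → σ) (a : ℤ) (m i : ℕ) (h : i < m) :
    (subwordAt x a m)[i]'(by simp [h]) = x (a + i) := by
  simp [subwordAt]

lemma subwordAt_shiftZ (t : ℤ) (x : ℤ → σ) (a : ℤ) (m : ℕ) :
    subwordAt (shiftZ t x) a m = subwordAt x (a + t) m := by
  apply List.ext_getElem (by simp)
  intro i h1 h2
  simp [subwordAt, shiftZ]
  ring_nf

lemma take_subwordAt (x : ℤ → σ) (a : ℤ) (m q : ℕ) (h : q ≤ m) :
    (subwordAt x a m).take q = subwordAt x a q := by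
  apply List.ext_getElem (by simp [h])
  intro i h1 h2
  simp only [subwordAt_length, List.length_take] at h1 h2
  simp only [List.getElem_take]
  rw [subwordAt_getElem, subwordAt_getElem] <;> omega

lemma drop_subwordAt (x : ℤ → σ) (a : ℤ) (m p : ℕ) :
    (subwordAt x a m).drop p = subwordAt x (a + p) (m - p) := by
  apply List.ext_getElem (by simp)
  intro i h1 h2
  simp only [subwordAt_length, List.length_drop] at h1 h2
  simp only [List.getElem_drop]
  rw [subwordAt_getElem, subwordAt_getElem]
  · push_cast; ring_nf
  · omega
  · omega

lemma subwordAt_append (x : ℤ → σ) (a : ℤ) (m₁ m₂ : ℕ) :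
    subwordAt x a (m₁ + m₂) = subwordAt x a m₁ ++ subwordAt x (a + m₁) m₂ := by
  apply List.ext_getElem (by simp)
  intro i h1 h2
  simp only [subwordAt_length, List.length_append] at h1 h2
  rcases lt_or_ge i m₁ with h | h
  · rw [List.getElem_append_left (by simpa using h), subwordAt_getElem, subwordAt_getElem] <;> omega
  · rw [List.getElem_append_right (by simpa using h), subwordAt_getElem, subwordAt_getElem]
    · simp only [subwordAt_length]; push_cast [Nat.cast_sub h]; ring_nf
    · simp only [subwordAt_length]; omega
    · omega

lemma occursAt_subwordAt_iff (x : ℤ → σ) (a : ℤ) (m : ℕ) (w : List σ) (p : ℕ) :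
    occursAt w (subwordAt x a m) p ↔ p + w.length ≤ m ∧ subwordAt x (a + p) w.length = w := by
  unfold occursAt
  rw [subwordAt_length, drop_subwordAt]
  constructor
  · rintro ⟨h1, h2⟩
    rw [take_subwordAt _ _ _ _ (by omega)] at h2
    exact ⟨h1, h2⟩
  · rintro ⟨h1, h2⟩
    rw [take_subwordAt _ _ _ _ (by omega)]
    exact ⟨h1, h2⟩

lemma shiftZ_shiftZ (s t : ℤ) (x : ℤ → σ) : shiftZ s (shiftZ t x) = shiftZ (s + t) x := by
  funext m
  simp [shiftZ, add_assoc]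

@[simp] lemma shiftZ_zero (x : ℤ → σ) : shiftZ 0 x = x := by funext m; simp [shiftZ]

lemma Kseq_pos {k : ℕ → ℕ} (hk : ∀ n, 2 ≤ k n) (n : ℕ) : 0 < Kseq k n := by
  induction n with
  | zero => simp [Kseq]
  | succ n ih => have := hk n; simp only [Kseq]; positivity

lemma Kseq_le {k : ℕ → ℕ} (hk : ∀ n, 2 ≤ k n) {n N : ℕ} (h : n ≤ N) :
    Kseq k n ≤ Kseq k N := by
  induction N with
  | zero => simpa [Nat.le_zero.mp h]
  | succ N ih =>
    rcases Nat.lt_or_ge n (N+1) with h' | h'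
    · have := ih (by omega)
      have h2 := hk N
      have h3 := Kseq_pos hk N
      calc Kseq k n ≤ Kseq k N := this
        _ ≤ Kseq k N * k N := Nat.le_mul_of_pos_right _ (by omega)
        _ = Kseq k (N+1) := rfl
    · have : n = N + 1 := by omega
      simp [this]

lemma Kseq_dvd {k : ℕ → ℕ} {n N : ℕ} (h : n ≤ N) : Kseq k n ∣ Kseq k N := by
  induction N with
  | zero => simpa [Nat.le_zero.mp h]
  | succ N ih =>
    rcases Nat.lt_or_ge n (N+1) with h' | h'
    · exact dvd_mul_of_dvd_left (ih (by omega)) _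
    · have : n = N + 1 := by omega
      simp [this]

end Aux

section Blocks
variable {σ : Type*} [Fintype σ] {k : ℕ → ℕ} {W : ℕ → Set (List σ)}

/-- every `N`-word decomposes into a list of `n`-words, for `n ≤ N`. -/
lemma blocks_decomp (hW : OdometerBasedCS σ k W) {n N : ℕ} (h : n ≤ N) {w : List σ}
    (hw : w ∈ W N) : ∃ L : List (List σ), (∀ u ∈ L, u ∈ W n) ∧ w = L.flatten := by
  induction N generalizing w with
  | zero =>
    have hn : n = 0 := Nat.le_zero.mp h
    subst hn
    exact ⟨[w], fun u hu => by rw [List.mem_singleton] at hu; subst hu; exact hw, by simp⟩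
  | succ N ih =>
    rcases Nat.lt_or_ge n (N+1) with h' | h'
    · obtain ⟨g, hg, hwg⟩ := hW.concat N w hw
      choose L hL hLf using fun i => ih (by omega) (hg i)
      refine ⟨(List.ofFn L).flatten, ?_, ?_⟩
      · intro u hu
        rw [List.mem_flatten] at hu
        obtain ⟨l, hl, hul⟩ := hu
        rw [List.mem_ofFn] at hl
        obtain ⟨i, rfl⟩ := hl
        exact hL i u hul
      · rw [hwg, List.flatten_flatten, List.map_ofFn]
        congr 1
        exact congrArg List.ofFn (funext hLf)
    · have : n = N + 1 := by omega
      subst this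
      exact ⟨[w], fun u hu => by rw [List.mem_singleton] at hu; subst hu; exact hw, by simp⟩

lemma flatten_block_extract {K : ℕ} (hK : 0 < K) :
    ∀ (L : List (List σ)), (∀ u ∈ L, u.length = K) → ∀ t : ℕ,
    (t + 1) * K ≤ L.flatten.length → ∃ u ∈ L, (L.flatten.drop (t * K)).take K = u := by
  intro L
  induction L with
  | nil => intro _ t ht; simp at ht; omega
  | cons hd tl ih =>
    intro hlen t ht
    have hhd : hd.length = K := hlen hd (by simp)
    cases t with
    | zero =>
      refine ⟨hd, by simp, ?_⟩
      simp only [Nat.zero_mul, List.drop_zero, List.flatten_cons]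
      rw [← hhd, List.take_left]
    | succ t =>
      have hdrop : (hd :: tl).flatten.drop ((t + 1) * K) = tl.flatten.drop (t * K) := by
        rw [List.flatten_cons, show (t+1)*K = hd.length + t * K by rw [hhd]; ring,
          ← List.drop_drop, List.drop_left]
      rw [hdrop]
      have : (t + 1) * K ≤ tl.flatten.length := by
        have h2 : (hd :: tl).flatten.length = K + tl.flatten.length := by
          simp [List.flatten_cons, hhd]
        have h3 : (t + 1 + 1) * K = K + (t + 1) * K := by ring
        omega
      obtain ⟨u, hu, heq⟩ := ih (fun u hu => hlen u (by simp [hu])) t this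
      exact ⟨u, by simp [hu], heq⟩

/-- aligned blocks of an `N`-word are `n`-words. -/
lemma aligned_block_mem (hW : OdometerBasedCS σ k W) {n N : ℕ} (h : n ≤ N) {w : List σ}
    (hw : w ∈ W N) (t : ℕ) (ht : (t + 1) * Kseq k n ≤ Kseq k N) :
    (w.drop (t * Kseq k n)).take (Kseq k n) ∈ W n := by
  obtain ⟨L, hL, rfl⟩ := blocks_decomp hW h hw
  have hlen : ∀ u ∈ L, u.length = Kseq k n := fun u hu => hW.length_eq n u (hL u hu)
  have hflat : L.flatten.length = Kseq k N := hW.length_eq N _ hw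
  obtain ⟨u, hu, heq⟩ := flatten_block_extract (Kseq_pos hW.two_le n) L hlen t (by omega)
  rw [heq]
  exact hL u hu

end Blocks

section ParseSec
variable {σ : Type*} [Fintype σ] {k : ℕ → ℕ} {W : ℕ → Set (List σ)}

/-- `x` parses into `n`-words with offset `a`. -/
def Parse (W : ℕ → Set (List σ)) (k : ℕ → ℕ) (n : ℕ) (x : ℤ → σ) (a : ℤ) : Prop :=
  ∀ j : ℤ, subwordAt x (a + j * (Kseq k n : ℤ)) (Kseq k n) ∈ W n

lemma Parse.block {n : ℕ} {x : ℤ → σ} {a : ℤ} (h : Parse W k n x a) (b : ℤ)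
    (hb : (Kseq k n : ℤ) ∣ (b - a)) : subwordAt x b (Kseq k n) ∈ W n := by
  obtain ⟨j, hj⟩ := hb
  have hb' : b = a + j * (Kseq k n : ℤ) := by linear_combination hj
  rw [hb']
  exact h j

lemma read_between (hW : OdometerBasedCS σ k W) (n : ℕ) (x : ℤ → σ) (a b : ℤ)
    (hu : subwordAt x a (Kseq k n) ∈ W n)
    (hv : subwordAt x (a + Kseq k n) (Kseq k n) ∈ W n)
    (hw : subwordAt x b (Kseq k n) ∈ W n)
    (h1 : a ≤ b) (h2 : b ≤ a + Kseq k n) : b = a ∨ b = a + Kseq k n := by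
  set K := Kseq k n with hK
  have hocc : occursAt (subwordAt x b K)
      (subwordAt x a K ++ subwordAt x (a + K) K) (b - a).toNat := by
    rw [← subwordAt_append, occursAt_subwordAt_iff]
    refine ⟨by rw [subwordAt_length]; omega, ?_⟩
    rw [subwordAt_length]
    congr 1
    omega
  rcases hW.unique_readable n _ hu _ hv _ hw _ hocc with h | h
  · left; omega
  · right; omega

lemma parse_congr (hW : OdometerBasedCS σ k W) {n : ℕ} {x : ℤ → σ} {a b : ℤ}
    (ha : Parse W k n x a) (hb : Parse W k n x b) : (Kseq k n : ℤ) ∣ (b - a) := by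
  have hK : (0:ℤ) < (Kseq k n : ℤ) := by exact_mod_cast Kseq_pos hW.two_le n
  obtain ⟨r, q, hr0, hrK, hrq⟩ : ∃ r q : ℤ, 0 ≤ r ∧ r < (Kseq k n : ℤ) ∧
      b - a = (Kseq k n : ℤ) * q + r :=
    ⟨(b - a) % (Kseq k n : ℤ), (b - a) / (Kseq k n : ℤ),
      Int.emod_nonneg _ (by omega), Int.emod_lt_of_pos _ hK,
      by linarith [Int.emod_add_mul_ediv (b - a) (Kseq k n : ℤ)]⟩
  have hw : subwordAt x (a + r) (Kseq k n) ∈ W n := hb.block _ ⟨-q, by linarith⟩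
  have hu : subwordAt x a (Kseq k n) ∈ W n := ha.block a ⟨0, by ring⟩
  have hv : subwordAt x (a + Kseq k n) (Kseq k n) ∈ W n := ha.block _ ⟨1, by ring⟩
  rcases read_between hW n x a (a + r) hu hv hw (by linarith) (by linarith) with h | h
  · exact ⟨q, by linarith⟩
  · exfalso; linarith

lemma parse_step (hW : OdometerBasedCS σ k W) {n : ℕ} {x : ℤ → σ} {a : ℤ}
    (h : Parse W k (n+1) x a) : Parse W k n x a := by
  intro j
  have hK : 0 < Kseq k n := Kseq_pos hW.two_le n
  have hkn : (0:ℤ) < (k n : ℤ) := by exact_mod_cast (by have := hW.two_le n; omega : 0 < k n)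
  obtain ⟨r, q, hr0, hrk, hrq⟩ : ∃ r q : ℤ, 0 ≤ r ∧ r < (k n : ℤ) ∧
      j = (k n : ℤ) * q + r :=
    ⟨j % (k n : ℤ), j / (k n : ℤ), Int.emod_nonneg _ (by omega),
      Int.emod_lt_of_pos _ hkn, by linarith [Int.emod_add_mul_ediv j (k n : ℤ)]⟩
  have hK' : Kseq k (n+1) = Kseq k n * k n := rfl
  have hrnat : r.toNat + 1 ≤ k n := by omega
  have ht1 : (r.toNat + 1) * Kseq k n ≤ Kseq k (n+1) := by
    calc (r.toNat + 1) * Kseq k n ≤ k n * Kseq k n := Nat.mul_le_mul_right _ hrnat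
      _ = Kseq k (n+1) := by rw [hK']; ring
  have ht2 : (r.toNat + 1) * Kseq k n = r.toNat * Kseq k n + Kseq k n := by ring
  have hblk := h q
  have heq : subwordAt x (a + j * (Kseq k n : ℤ)) (Kseq k n) =
      ((subwordAt x (a + q * (Kseq k (n+1) : ℤ)) (Kseq k (n+1))).drop
        (r.toNat * Kseq k n)).take (Kseq k n) := by
    rw [drop_subwordAt, take_subwordAt _ _ _ _ (by omega)]
    congr 1
    push_cast [Int.toNat_of_nonneg hr0, hK']
    linear_combination (Kseq k n : ℤ) * hrq
  rw [heq]
  exact aligned_block_mem hW (Nat.le_succ n) hblk r.toNat ht1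

lemma CSLimit_shiftZ (t : ℤ) {x : ℤ → σ} (hx : x ∈ CSLimit W) : shiftZ t x ∈ CSLimit W := by
  intro a m
  simp only [subwordAt_shiftZ]
  exact hx (a + t) m

lemma partial_exists (hW : OdometerBasedCS σ k W) (n : ℕ) (x : ℤ → σ)
    (hx : x ∈ CSLimit W) (R : ℕ) :
    ∃ a : ℤ, -(Kseq k n : ℤ) < a ∧ a ≤ 0 ∧
      ∀ j : ℤ, -(R:ℤ) ≤ j → j < R → subwordAt x (a + j * (Kseq k n : ℤ)) (Kseq k n) ∈ W n := by
  set K := Kseq k n with hKdef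
  have hK : 0 < K := Kseq_pos hW.two_le n
  set m := (2 * R + 2) * K with hm
  have hm2 : m = 2 * R * K + 2 * K := by rw [hm]; ring
  set s : ℤ := -(((R + 1) * K : ℕ) : ℤ) with hs
  obtain ⟨N, w, hwN, p, hocc⟩ := hx s m
  have hlenw : w.length = Kseq k N := hW.length_eq N w hwN
  obtain ⟨hpm, htake⟩ := hocc
  rw [subwordAt_length] at hpm htake
  have hnN : n ≤ N := by
    by_contra hc
    have h1 : Kseq k N ≤ K := Kseq_le hW.two_le (by omega)
    omega
  -- round p up to a multiple of K
  set c : ℕ := if p % K = 0 then 0 else K - p % K with hc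
  have hdm := Nat.div_add_mod p K
  have hmod : p % K < K := Nat.mod_lt _ hK
  have hcK : c < K := by rw [hc]; split <;> omega
  obtain ⟨e, he⟩ : ∃ e, p + c = e * K := by
    have h8 : K * (p / K) = p / K * K := Nat.mul_comm _ _
    have h9 : (p / K + 1) * K = p / K * K + K := by ring
    rw [hc]; split
    · exact ⟨p / K, by omega⟩
    · exact ⟨p / K + 1, by omega⟩
  -- the aligned blocks inside the window
  have key : ∀ t : ℕ, t ≤ 2*R → subwordAt x (s + ((c + t*K : ℕ) : ℤ)) K ∈ W n := by
    intro t ht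
    have htK : t * K ≤ 2 * R * K := Nat.mul_le_mul_right _ ht
    have h1 : c + t*K + K ≤ m := by omega
    have heq : subwordAt x (s + ((c + t*K : ℕ):ℤ)) K = (w.drop ((e + t) * K)).take K := by
      have h3 : p + (c + t * K) = (e + t) * K := by
        have : (e + t) * K = e * K + t * K := by ring
        omega
      calc subwordAt x (s + ((c + t*K : ℕ):ℤ)) K
          = ((subwordAt x s m).drop (c + t*K)).take K := by
            rw [drop_subwordAt, take_subwordAt _ _ _ _ (by omega)]
        _ = (((w.drop p).take m).drop (c + t*K)).take K := by rw [htake]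
        _ = (w.drop ((e + t) * K)).take K := by
            rw [List.drop_take, List.take_take, List.drop_drop, h3]
            congr 1
            omega
    rw [heq]
    refine aligned_block_mem hW hnN hwN (e + t) ?_
    have h4 : (e + t + 1) * K = e * K + t * K + K := by ring
    rw [← hKdef]
    omega
  -- normalize the offset into (-K, 0]
  have hKZ : (0:ℤ) < (K:ℤ) := by exact_mod_cast hK
  obtain ⟨mo, q, hmo0, hmoK, hmoq⟩ : ∃ mo q : ℤ, 0 ≤ mo ∧ mo < (K:ℤ) ∧
      -(s + (c:ℤ)) = (K:ℤ) * q + mo :=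
    ⟨(-(s + (c:ℤ))) % (K:ℤ), (-(s + (c:ℤ))) / (K:ℤ), Int.emod_nonneg _ (by omega),
      Int.emod_lt_of_pos _ hKZ, by linarith [Int.emod_add_mul_ediv (-(s + (c:ℤ))) (K:ℤ)]⟩
  set B : ℤ := s + (c : ℤ) with hB
  set a : ℤ := B + K * q with ha
  have haB : a = -mo := by rw [ha]; linarith
  have ha1 : -(K:ℤ) < a := by rw [haB]; linarith
  have ha2 : a ≤ 0 := by rw [haB]; linarith
  have hsval : s = -((R:ℤ)+1) * K := by rw [hs]; push_cast; ring
  have hBlo : -((R:ℤ)+1) * K ≤ B := by rw [hB, hsval]; push_cast; linarith [(by exact_mod_cast Nat.zero_le c : (0:ℤ) ≤ (c:ℤ))]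
  have hBhi : B < -(R:ℤ) * K := by
    rw [hB, hsval]
    have : (c:ℤ) < K := by exact_mod_cast hcK
    linarith
  have h7 : (K:ℤ) * q = a - B := by rw [ha]; ring
  have hqlo : (R:ℤ) ≤ q := by
    by_contra hcon
    push_neg at hcon
    have h5 : (K:ℤ) * q ≤ K * ((R:ℤ) - 1) :=
      mul_le_mul_of_nonneg_left (by omega) (by omega)
    have h9 : (K:ℤ) * ((R:ℤ) - 1) = -(K:ℤ) + (R:ℤ) * K := by ring
    have h10 : -((R:ℤ)) * K = -((R:ℤ) * K) := by ring
    linarith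
  have hqhi : q ≤ (R:ℤ) + 1 := by
    by_contra hcon
    push_neg at hcon
    have h5 : (K:ℤ) * ((R:ℤ) + 2) ≤ K * q :=
      mul_le_mul_of_nonneg_left (by omega) (by omega)
    have h9 : (K:ℤ) * ((R:ℤ) + 2) = ((R:ℤ) + 1) * K + K := by ring
    have h10 : -((R:ℤ) + 1) * K = -(((R:ℤ) + 1) * K) := by ring
    linarith
  refine ⟨a, ha1, ha2, ?_⟩
  intro j hj1 hj2
  have hqj0 : 0 ≤ q + j := by omega
  have hqj2 : q + j ≤ 2*R := by omega
  set t : ℕ := (q + j).toNat with htdef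
  have htc : (t : ℤ) = q + j := Int.toNat_of_nonneg hqj0
  have hpos : s + ((c + t*K : ℕ):ℤ) = a + j * (K:ℤ) := by
    push_cast
    rw [ha, hB]
    have h6 : (t:ℤ) * K = q * K + j * K := by rw [htc]; ring
    linarith
  rw [← hpos]
  exact key t (by omega)

lemma parse_exists (hW : OdometerBasedCS σ k W) (n : ℕ) (x : ℤ → σ) (hx : x ∈ CSLimit W) :
    ∃ a : ℤ, -(Kseq k n : ℤ) < a ∧ a ≤ 0 ∧ Parse W k n x a := by
  have hK : 0 < Kseq k n := Kseq_pos hW.two_le n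
  obtain ⟨a, ha1, ha2, ha⟩ := partial_exists hW n x hx 2
  refine ⟨a, ha1, ha2, ?_⟩
  intro j
  obtain ⟨b, hb1, hb2, hb⟩ := partial_exists hW n x hx (j.natAbs + 2)
  have hu : subwordAt x a (Kseq k n) ∈ W n := by simpa using ha 0 (by norm_num) (by norm_num)
  have hv : subwordAt x (a + Kseq k n) (Kseq k n) ∈ W n := by
    simpa using ha 1 (by norm_num) (by norm_num)
  have hu' : subwordAt x b (Kseq k n) ∈ W n := by
    simpa using hb 0 (by omega) (by omega)
  have hv' : subwordAt x (b + Kseq k n) (Kseq k n) ∈ W n := by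
    simpa using hb 1 (by omega) (by omega)
  have hEq : b = a := by
    rcases le_total a b with h | h
    · rcases read_between hW n x a b hu hv hu' h (by omega) with h' | h'
      · omega
      · omega
    · rcases read_between hW n x b a hu' hv' hu h (by omega) with h' | h'
      · omega
      · omega
  rw [← hEq]
  apply hb j (by omega) (by omega)

lemma mem_cylinder_iff {n : ℕ} {w : List σ} {x : ℤ → σ} :
    x ∈ cylinder W k n w ↔
      x ∈ CSLimit W ∧ Parse W k n x 0 ∧ subwordAt x 0 (Kseq k n) = w := by
  unfold cylinder Parse
  simp only [Set.mem_setOf_eq, zero_add]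

end ParseSec

section MoreParse
variable {σ : Type*} [Fintype σ] {k : ℕ → ℕ} {W : ℕ → Set (List σ)}

lemma Parse.of_shiftZ {n : ℕ} {x : ℤ → σ} {t a : ℤ} (h : Parse W k n (shiftZ t x) a) :
    Parse W k n x (a + t) := by
  intro j
  have h2 := h j
  rw [subwordAt_shiftZ] at h2
  rw [show a + t + j * (Kseq k n : ℤ) = a + j * (Kseq k n : ℤ) + t by ring]
  exact h2

lemma int_eq_zero_of_dvd_small {K d : ℤ} (h : K ∣ d) (h1 : -K < d) (h2 : d < K) : d = 0 := by
  rcases h with ⟨c, rfl⟩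
  rcases lt_trichotomy c 0 with h3 | h3 | h3
  · nlinarith
  · simp [h3]
  · nlinarith

lemma add_le_of_dvd_lt {K p M : ℕ} (h1 : K ∣ p) (h2 : K ∣ M) (h3 : p < M) : p + K ≤ M := by
  obtain ⟨c, rfl⟩ := h1
  obtain ⟨d, rfl⟩ := h2
  rcases Nat.eq_zero_or_pos K with hK | hK
  · omega
  · have hcd : c < d := lt_of_mul_lt_mul_left h3 (Nat.zero_le K)
    have h5 : K * (c + 1) ≤ K * d := Nat.mul_le_mul_left K (by omega)
    have h6 : K * (c + 1) = K * c + K := by ring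
    omega

end MoreParse

section MeasureSec
open scoped ENNReal
variable {α : Type} [Fintype α] [MeasurableSpace α] [DiscreteMeasurableSpace α]
variable {k : ℕ → ℕ} {W : ℕ → Set (List α)}

lemma measurableSet_subword_mem (a : ℤ) (m : ℕ) (S : Set (List α)) :
    MeasurableSet {x : ℤ → α | subwordAt x a m ∈ S} := by
  have h : {x : ℤ → α | subwordAt x a m ∈ S} =
      (fun (x : ℤ → α) (i : Fin m) => x (a + i)) ⁻¹' {g : Fin m → α | List.ofFn g ∈ S} := rfl
  rw [h]
  exact (measurable_pi_lambda _ fun i => measurable_pi_apply _) MeasurableSet.of_discrete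

lemma measurableSet_CSLimit : MeasurableSet (CSLimit W) := by
  have h : CSLimit W = ⋂ (a : ℤ) (m : ℕ),
      {x : ℤ → α | subwordAt x a m ∈
        {l : List α | ∃ n, ∃ w ∈ W n, ∃ p, occursAt l w p}} := by
    ext x
    simp only [CSLimit, Set.mem_setOf_eq, Set.mem_iInter]
  rw [h]
  exact MeasurableSet.iInter fun a =>
    MeasurableSet.iInter fun m => measurableSet_subword_mem a m _

lemma measurableSet_cylinder (n : ℕ) (w : List α) : MeasurableSet (cylinder W k n w) := by
  have h : cylinder W k n w = CSLimit W ∩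
      ((⋂ j : ℤ, {x : ℤ → α | subwordAt x (j * (Kseq k n : ℤ)) (Kseq k n) ∈ W n}) ∩
       {x : ℤ → α | subwordAt x 0 (Kseq k n) ∈ ({w} : Set (List α))}) := by
    ext x
    simp only [cylinder, Set.mem_setOf_eq, Set.mem_inter_iff, Set.mem_iInter,
      Set.mem_singleton_iff]
  rw [h]
  exact measurableSet_CSLimit.inter
    ((MeasurableSet.iInter fun j => measurableSet_subword_mem _ _ _).inter
      (measurableSet_subword_mem _ _ _))

lemma measurable_shiftZ (t : ℤ) : Measurable (shiftZ t : (ℤ → α) → (ℤ → α)) :=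
  measurable_pi_lambda _ fun m => measurable_pi_apply _

lemma map_shiftZ {ρ : Measure (ℤ → α)} (hinv : Measure.map shift ρ = ρ) (t : ℤ) :
    Measure.map (shiftZ t) ρ = ρ := by
  have hsh : Measurable (shift : (ℤ → α) → (ℤ → α)) :=
    measurable_pi_lambda _ fun m => measurable_pi_apply _
  have hneg : Measure.map (shiftZ (-1)) ρ = ρ := by
    conv_lhs => rw [← hinv]
    rw [Measure.map_map (measurable_shiftZ (-1)) hsh]
    have hid : (shiftZ (-1) : (ℤ → α) → (ℤ → α)) ∘ shift = id := by
      funext x m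
      simp only [Function.comp_apply, shiftZ, shift, id_eq]
      congr 1
      ring
    rw [hid, Measure.map_id]
  induction t using Int.induction_on with
  | zero =>
    have hid : (shiftZ (0:ℤ) : (ℤ → α) → (ℤ → α)) = id := by
      funext x; simp [shiftZ]
    rw [hid, Measure.map_id]
  | succ i ih =>
    have hcomp : (shiftZ ((i:ℤ)+1) : (ℤ → α) → (ℤ → α)) = shift ∘ shiftZ (i:ℤ) := by
      funext x m
      simp only [Function.comp_apply, shiftZ, shift]
      congr 1
      ring
    rw [hcomp, ← Measure.map_map hsh (measurable_shiftZ _), ih, hinv]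
  | pred i ih =>
    have hcomp : (shiftZ (-(i:ℤ)-1) : (ℤ → α) → (ℤ → α)) = shiftZ (-1) ∘ shiftZ (-(i:ℤ)) := by
      funext x m
      simp only [Function.comp_apply, shiftZ]
      congr 1
      ring
    rw [hcomp, ← Measure.map_map (measurable_shiftZ _) (measurable_shiftZ _), ih, hneg]

lemma measure_preimage_shiftZ {ρ : Measure (ℤ → α)} (hinv : Measure.map shift ρ = ρ)
    (t : ℤ) {S : Set (ℤ → α)} (hS : MeasurableSet S) : ρ (shiftZ t ⁻¹' S) = ρ S := by
  conv_rhs => rw [← map_shiftZ hinv t]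
  rw [Measure.map_apply (measurable_shiftZ t) hS]

lemma sum_cyl (hW : OdometerBasedCS α k W) (ρ : Measure (ℤ → α)) [IsProbabilityMeasure ρ]
    (hinv : Measure.map shift ρ = ρ) (hsupp : ρ (CSLimit W) = 1) (m : ℕ) :
    ∑ w ∈ (hW.finite m).toFinset, (Kseq k m : ℝ≥0∞) * ρ (cylinder W k m w) = 1 := by
  classical
  have hK : 0 < Kseq k m := Kseq_pos hW.two_le m
  set Fm := (hW.finite m).toFinset with hFm
  set s : Finset (List α × ℕ) := Fm ×ˢ Finset.range (Kseq k m) with hs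
  set f : List α × ℕ → Set (ℤ → α) :=
    fun q => shiftZ (-(q.2:ℤ)) ⁻¹' cylinder W k m q.1 with hf
  have hmeas : ∀ q ∈ s, MeasurableSet (f q) := fun q _ =>
    measurable_shiftZ _ (measurableSet_cylinder m q.1)
  have hdisj : (↑s : Set (List α × ℕ)).PairwiseDisjoint f := by
    intro q1 h1 q2 h2 hne
    have hm1 := Finset.mem_product.mp (Finset.mem_coe.mp h1)
    have hm2 := Finset.mem_product.mp (Finset.mem_coe.mp h2)
    have hb1 : q1.2 < Kseq k m := Finset.mem_range.mp hm1.2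
    have hb2 : q2.2 < Kseq k m := Finset.mem_range.mp hm2.2
    apply Set.disjoint_left.mpr
    intro x hx1 hx2
    simp only [hf, Set.mem_preimage] at hx1 hx2
    rw [mem_cylinder_iff] at hx1 hx2
    have px1 : Parse W k m x (0 + -(q1.2:ℤ)) := Parse.of_shiftZ hx1.2.1
    have px2 : Parse W k m x (0 + -(q2.2:ℤ)) := Parse.of_shiftZ hx2.2.1
    have hd := parse_congr hW px1 px2
    have hdd : (Kseq k m : ℤ) ∣ ((q1.2:ℤ) - (q2.2:ℤ)) := by
      have he : (0 + -(q2.2:ℤ)) - (0 + -(q1.2:ℤ)) = (q1.2:ℤ) - (q2.2:ℤ) := by ring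
      rwa [he] at hd
    have hpe : q1.2 = q2.2 := by
      have := int_eq_zero_of_dvd_small hdd (by omega) (by omega)
      omega
    have hwe : q1.1 = q2.1 := by
      have e1 := hx1.2.2
      have e2 := hx2.2.2
      rw [subwordAt_shiftZ] at e1 e2
      rw [← e1, ← e2, hpe]
    exact hne (Prod.ext hwe hpe)
  have hcover : CSLimit W ⊆ ⋃ q ∈ s, f q := by
    intro x hx
    obtain ⟨a, ha1, ha2, hp⟩ := parse_exists hW m x hx
    set p : ℕ := (-a).toNat with hpdef
    have hpa : -(p:ℤ) = a := by omega
    set w₀ : List α := subwordAt x a (Kseq k m) with hw₀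
    have hw₀W : w₀ ∈ W m := hp.block a ⟨0, by ring⟩
    have hmem : x ∈ f (w₀, p) := by
      simp only [hf, Set.mem_preimage, hpa]
      rw [mem_cylinder_iff]
      refine ⟨CSLimit_shiftZ a hx, ?_, ?_⟩
      · intro j
        rw [subwordAt_shiftZ]
        exact hp.block _ ⟨j, by ring⟩
      · rw [subwordAt_shiftZ, zero_add]
    have hqs : (w₀, p) ∈ s := Finset.mem_product.mpr
      ⟨(hW.finite m).mem_toFinset.mpr hw₀W, Finset.mem_range.mpr (by omega)⟩
    exact Set.mem_biUnion hqs hmem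
  have h1 : ρ (⋃ q ∈ s, f q) = ∑ q ∈ s, ρ (f q) := measure_biUnion_finset hdisj hmeas
  have h2 : ρ (⋃ q ∈ s, f q) = 1 := by
    refine le_antisymm prob_le_one ?_
    rw [← hsupp]
    exact measure_mono hcover
  calc ∑ w ∈ Fm, (Kseq k m : ℝ≥0∞) * ρ (cylinder W k m w)
      = ∑ w ∈ Fm, ∑ p ∈ Finset.range (Kseq k m), ρ (f (w, p)) := by
        refine Finset.sum_congr rfl fun w _ => ?_
        have : ∀ p ∈ Finset.range (Kseq k m), ρ (f (w, p)) = ρ (cylinder W k m w) :=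
          fun p _ => measure_preimage_shiftZ hinv _ (measurableSet_cylinder m w)
        rw [Finset.sum_congr rfl this, Finset.sum_const, Finset.card_range, nsmul_eq_mul]
    _ = ∑ q ∈ s, ρ (f q) := by rw [hs, Finset.sum_product]
    _ = 1 := by rw [← h1, h2]

open Classical in
/-- the aligned occurrence positions of the `n`-word `w` in the `(n+1)`-word `w'`. -/
noncomputable def alignedOcc (k : ℕ → ℕ) (n : ℕ) (w w' : List α) : Finset ℕ :=
  (Finset.range (Kseq k (n+1))).filter (fun p => Kseq k n ∣ p ∧ occursAt w w' p)

lemma mem_alignedOcc {n : ℕ} {w w' : List α} {p : ℕ} :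
    p ∈ alignedOcc k n w w' ↔ p < Kseq k (n+1) ∧ Kseq k n ∣ p ∧ occursAt w w' p := by
  classical
  simp [alignedOcc]

lemma one_le_alignedOcc_card (hW : OdometerBasedCS α k W) {n : ℕ} {w w' : List α}
    (hw : w ∈ W n) (hw' : w' ∈ W (n+1)) : 1 ≤ (alignedOcc k n w w').card := by
  obtain ⟨p₀, hocc⟩ := hW.subword n w hw w' hw'
  set K := Kseq k n with hKdef
  have hK : 0 < K := Kseq_pos hW.two_le n
  have hlw : w.length = K := hW.length_eq n w hw
  have hlw' : w'.length = Kseq k (n+1) := hW.length_eq (n+1) w' hw'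
  have hKK' : K ∣ Kseq k (n+1) := Kseq_dvd (Nat.le_succ n)
  have hp₀K : p₀ + K ≤ Kseq k (n+1) := by
    have := hocc.1; omega
  -- p₀ is aligned
  have hdvd : K ∣ p₀ := by
    have hdm := Nat.div_add_mod p₀ K
    set t := p₀ / K with ht
    set r := p₀ % K with hr
    have hmod : r < K := Nat.mod_lt _ hK
    rcases Nat.eq_zero_or_pos r with hr0 | hr0
    · exact Nat.dvd_of_mod_eq_zero hr0
    · exfalso
      have htK : t * K + r = p₀ := by rw [Nat.mul_comm]; omega
      have ht1 : (t + 1) * K ≤ Kseq k (n+1) := by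
        have : (t + 1) * K = t * K + K := by ring
        omega
      have ht1' : (t + 1) * K < Kseq k (n+1) := by
        have : (t + 1) * K = t * K + K := by ring
        omega
      have ht2 : (t + 1) * K + K ≤ Kseq k (n+1) :=
        add_le_of_dvd_lt (dvd_mul_left (Kseq k n) (t+1)) hKK' ht1'
      have hu : (w'.drop (t * K)).take K ∈ W n :=
        aligned_block_mem hW (by omega : n ≤ n + 1) hw' t ht1
      have hv : (w'.drop ((t+1) * K)).take K ∈ W n :=
        aligned_block_mem hW (by omega : n ≤ n + 1) hw' (t+1)
          (by
            have e1 : (t + 1 + 1) * Kseq k n = (t + 1) * Kseq k n + Kseq k n := by ring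
            have e3 : (t + 1) * K = (t + 1) * Kseq k n := by rw [hKdef]
            omega)
      have huv : (w'.drop (t * K)).take K ++ (w'.drop ((t+1) * K)).take K =
          (w'.drop (t * K)).take (K + K) := by
        rw [List.take_add, List.drop_drop]
        congr 2
        ring
      have hlen : ((w'.drop (t * K)).take (K + K)).length = K + K := by
        simp only [List.length_take, List.length_drop]
        have : (t + 1) * K = t * K + K := by ring
        omega
      have hoccr : occursAt w ((w'.drop (t * K)).take K ++ (w'.drop ((t+1) * K)).take K) r := by
        rw [huv]
        constructor
        · rw [hlen, hlw]; omega
        · rw [List.drop_take, List.drop_drop, htK, hlw, List.take_take]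
          have hmin : K ⊓ (K + K - r) = K := by omega
          rw [hmin]
          have h7 := hocc.2
          rw [hlw] at h7
          exact h7
      rcases hW.unique_readable n _ hu _ hv _ hw _ hoccr with h | h <;> omega
  refine Finset.card_pos.mpr ⟨p₀, ?_⟩
  rw [mem_alignedOcc]
  exact ⟨by omega, hdvd, hocc⟩

lemma alignedOcc_card_le_occCount (k : ℕ → ℕ) (n : ℕ) (w w' : List α) :
    (alignedOcc k n w w').card ≤ occCount w w' := by
  have hsub : (↑(alignedOcc k n w w') : Set ℕ) ⊆ {p : ℕ | occursAt w w' p} := by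
    intro p hp
    have := mem_alignedOcc.mp (Finset.mem_coe.mp hp)
    exact this.2.2
  have hfin : {p : ℕ | occursAt w w' p}.Finite := by
    apply Set.Finite.subset (Set.finite_Iio (w'.length + 1))
    intro p hp
    have := hp.1
    simp only [Set.mem_Iio]
    omega
  calc (alignedOcc k n w w').card = (↑(alignedOcc k n w w') : Set ℕ).ncard :=
        (Set.ncard_coe_finset _).symm
    _ ≤ {p : ℕ | occursAt w w' p}.ncard := Set.ncard_le_ncard hsub hfin
    _ = occCount w w' := by rw [occCount, ← Nat.card_coe_set_eq]; rfl

lemma cyl_decomp (hW : OdometerBasedCS α k W) (ρ : Measure (ℤ → α)) [IsProbabilityMeasure ρ]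
    (hinv : Measure.map shift ρ = ρ) (n : ℕ) (w : List α) (hw : w ∈ W n) :
    ρ (cylinder W k n w) = ∑ w' ∈ (hW.finite (n+1)).toFinset,
      ((alignedOcc k n w w').card : ℝ≥0∞) * ρ (cylinder W k (n+1) w') := by
  classical
  have hK : 0 < Kseq k n := Kseq_pos hW.two_le n
  have hK' : 0 < Kseq k (n+1) := Kseq_pos hW.two_le (n+1)
  have hKK' : Kseq k n ∣ Kseq k (n+1) := Kseq_dvd (Nat.le_succ n)
  have hKle : Kseq k n ≤ Kseq k (n+1) := Kseq_le hW.two_le (Nat.le_succ n)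
  have hlw : w.length = Kseq k n := hW.length_eq n w hw
  set F := (hW.finite (n+1)).toFinset with hF
  set s : Finset (List α × ℕ) := F ×ˢ Finset.range (Kseq k (n+1)) with hs
  set g : List α × ℕ → Set (ℤ → α) := fun q =>
    if Kseq k n ∣ q.2 ∧ occursAt w q.1 q.2 then
      shiftZ (-(q.2:ℤ)) ⁻¹' cylinder W k (n+1) q.1 else ∅ with hg
  have hmeas : ∀ q ∈ s, MeasurableSet (g q) := by
    intro q _
    simp only [hg]
    split
    · exact measurable_shiftZ _ (measurableSet_cylinder (n+1) q.1)
    · exact MeasurableSet.empty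
  have hdisj : (↑s : Set (List α × ℕ)).PairwiseDisjoint g := by
    intro q1 h1 q2 h2 hne
    have hm1 := Finset.mem_product.mp (Finset.mem_coe.mp h1)
    have hm2 := Finset.mem_product.mp (Finset.mem_coe.mp h2)
    have hb1 : q1.2 < Kseq k (n+1) := Finset.mem_range.mp hm1.2
    have hb2 : q2.2 < Kseq k (n+1) := Finset.mem_range.mp hm2.2
    apply Set.disjoint_left.mpr
    intro x hx1 hx2
    simp only [hg] at hx1 hx2
    by_cases c1 : Kseq k n ∣ q1.2 ∧ occursAt w q1.1 q1.2
    swap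
    · simp [c1] at hx1
    by_cases c2 : Kseq k n ∣ q2.2 ∧ occursAt w q2.1 q2.2
    swap
    · simp [c2] at hx2
    rw [if_pos c1] at hx1
    rw [if_pos c2] at hx2
    simp only [Set.mem_preimage] at hx1 hx2
    rw [mem_cylinder_iff] at hx1 hx2
    have px1 : Parse W k (n+1) x (0 + -(q1.2:ℤ)) := Parse.of_shiftZ hx1.2.1
    have px2 : Parse W k (n+1) x (0 + -(q2.2:ℤ)) := Parse.of_shiftZ hx2.2.1
    have hd := parse_congr hW px1 px2
    have hdd : (Kseq k (n+1) : ℤ) ∣ ((q1.2:ℤ) - (q2.2:ℤ)) := by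
      have he : (0 + -(q2.2:ℤ)) - (0 + -(q1.2:ℤ)) = (q1.2:ℤ) - (q2.2:ℤ) := by ring
      rwa [he] at hd
    have hpe : q1.2 = q2.2 := by
      have := int_eq_zero_of_dvd_small hdd (by omega) (by omega)
      omega
    have hwe : q1.1 = q2.1 := by
      have e1 := hx1.2.2
      have e2 := hx2.2.2
      rw [subwordAt_shiftZ] at e1 e2
      rw [← e1, ← e2, hpe]
    exact hne (Prod.ext hwe hpe)
  have hseteq : cylinder W k n w = ⋃ q ∈ s, g q := by
    ext x
    constructor
    · intro hx
      rw [mem_cylinder_iff] at hx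
      obtain ⟨hxL, hxP, hxw⟩ := hx
      obtain ⟨a, ha1, ha2, hp⟩ := parse_exists hW (n+1) x hxL
      set p : ℕ := (-a).toNat with hpdef
      have hpa : -(p:ℤ) = a := by omega
      set w' : List α := subwordAt x a (Kseq k (n+1)) with hw'def
      have hw'W : w' ∈ W (n+1) := hp.block a ⟨0, by ring⟩
      -- p is a multiple of Kseq k n
      have hPn : Parse W k n x a := parse_step hW hp
      have hP0 : Parse W k n x 0 := hxP
      have hdvdZ : (Kseq k n : ℤ) ∣ ((p:ℕ):ℤ) := by
        obtain ⟨c, hc⟩ := parse_congr hW hPn hP0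
        exact ⟨c, by omega⟩
      have hdvd : Kseq k n ∣ p := by exact_mod_cast hdvdZ
      have hpK' : p < Kseq k (n+1) := by omega
      -- occurrence of w in w' at p
      have hpKle : p + Kseq k n ≤ Kseq k (n+1) := by
        rcases Nat.eq_zero_or_pos p with h0 | h0
        · omega
        · exact add_le_of_dvd_lt hdvd hKK' hpK'
      have hocc : occursAt w w' p := by
        rw [hw'def, occursAt_subwordAt_iff, hlw]
        refine ⟨hpKle, ?_⟩
        rw [show a + (p:ℤ) = 0 by omega]
        exact hxw
      have hcond : Kseq k n ∣ p ∧ occursAt w w' p := ⟨hdvd, hocc⟩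
      have hmem : x ∈ g (w', p) := by
        simp only [hg]
        rw [if_pos hcond]
        simp only [Set.mem_preimage, hpa]
        rw [mem_cylinder_iff]
        refine ⟨CSLimit_shiftZ a hxL, ?_, ?_⟩
        · intro j
          rw [subwordAt_shiftZ]
          exact hp.block _ ⟨j, by ring⟩
        · rw [subwordAt_shiftZ, zero_add]
      have hqs : (w', p) ∈ s := Finset.mem_product.mpr
        ⟨(hW.finite (n+1)).mem_toFinset.mpr hw'W, Finset.mem_range.mpr hpK'⟩
      exact Set.mem_biUnion hqs hmem
    · intro hx
      simp only [Set.mem_iUnion] at hx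
      obtain ⟨q, hqs, hxq⟩ := hx
      simp only [hg] at hxq
      by_cases hc : Kseq k n ∣ q.2 ∧ occursAt w q.1 q.2
      swap
      · simp [hc] at hxq
      rw [if_pos hc] at hxq
      obtain ⟨hdvd, hocc⟩ := hc
      have hmF := Finset.mem_product.mp hqs
      have hq1W : q.1 ∈ W (n+1) := (hW.finite (n+1)).mem_toFinset.mp hmF.1
      have hlq1 : q.1.length = Kseq k (n+1) := hW.length_eq _ _ hq1W
      have hb : q.2 < Kseq k (n+1) := Finset.mem_range.mp hmF.2
      have hpKle : q.2 + Kseq k n ≤ Kseq k (n+1) := by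
        rcases Nat.eq_zero_or_pos q.2 with h0 | h0
        · omega
        · exact add_le_of_dvd_lt hdvd hKK' hb
      simp only [Set.mem_preimage] at hxq
      rw [mem_cylinder_iff] at hxq
      obtain ⟨hyL, hyP, hyw⟩ := hxq
      have hxy : x = shiftZ (q.2:ℤ) (shiftZ (-(q.2:ℤ)) x) := by
        rw [shiftZ_shiftZ]
        simp
      rw [mem_cylinder_iff]
      refine ⟨?_, ?_, ?_⟩
      · rw [hxy]; exact CSLimit_shiftZ _ hyL
      · have hPy : Parse W k n (shiftZ (-(q.2:ℤ)) x) 0 := parse_step hW hyP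
        have hPx : Parse W k n x (0 + -(q.2:ℤ)) := Parse.of_shiftZ hPy
        obtain ⟨c, hcc⟩ := hdvd
        intro j
        apply hPx.block
        refine ⟨j + c, ?_⟩
        push_cast [hcc]
        ring
      · have h1 : subwordAt x 0 (Kseq k n) =
            subwordAt (shiftZ (-(q.2:ℤ)) x) ((q.2:ℕ):ℤ) (Kseq k n) := by
          rw [subwordAt_shiftZ]
          congr 1
          ring
        have h2 : subwordAt (shiftZ (-(q.2:ℤ)) x) ((q.2:ℕ):ℤ) (Kseq k n) =
            ((subwordAt (shiftZ (-(q.2:ℤ)) x) 0 (Kseq k (n+1))).drop q.2).take (Kseq k n) := by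
          rw [drop_subwordAt, take_subwordAt _ _ _ _ (by omega), zero_add]
        rw [h1, h2, hyw]
        have h3 := hocc.2
        rwa [hlw] at h3
  rw [hseteq, measure_biUnion_finset hdisj hmeas, hs, Finset.sum_product]
  refine Finset.sum_congr rfl fun w' hw'F => ?_
  have hstep : ∀ p ∈ Finset.range (Kseq k (n+1)), ρ (g (w', p)) =
      if Kseq k n ∣ p ∧ occursAt w w' p then ρ (cylinder W k (n+1) w') else 0 := by
    intro p _
    simp only [hg]
    split
    · exact measure_preimage_shiftZ hinv _ (measurableSet_cylinder _ _)
    · exact measure_empty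
  rw [Finset.sum_congr rfl hstep, ← Finset.sum_filter]
  rw [Finset.sum_const]
  have hcardeq : (Finset.filter (fun p => Kseq k n ∣ p ∧ occursAt w w' p)
      (Finset.range (Kseq k (n+1)))).card = (alignedOcc k n w w').card := by
    congr 1
  rw [hcardeq, nsmul_eq_mul]

end MeasureSec

/-- if an odometer based construction sequence has the small word property
with respect to `(δ_n)` with `0 < δ_n < 1` (i.e. `f_n < δ_n` for all `n`), then for every
shift-invariant Borel probability measure `ρ` on the limit, every `w ∈ W_n` and every
`w' ∈ W_{n+1}` one has `ρ(⟨w'⟩) < δ_{n+1}/K_{n+1} < ρ(⟨w⟩)`. -/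
theorem small_word_property_cylinder_measures
    {α : Type} [Fintype α] [MeasurableSpace α] [DiscreteMeasurableSpace α]
    (k : ℕ → ℕ) (W : ℕ → Set (List α)) (hW : OdometerBasedCS α k W)
    (δ : ℕ → ℝ) (hδ0 : ∀ n, 0 < δ n) (hδ1 : ∀ n, δ n < 1)
    (hswp : ∀ n, maxFreq k W n < δ n)
    (ρ : Measure (ℤ → α)) (hprob : IsProbabilityMeasure ρ)
    (hinv : Measure.map shift ρ = ρ) (hsupp : ρ (CSLimit W) = 1) :
    ∀ n : ℕ, ∀ w ∈ W n, ∀ w' ∈ W (n + 1),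
      (ρ (cylinder W k (n + 1) w')).toReal < δ (n + 1) / (Kseq k (n + 1) : ℝ) ∧
      δ (n + 1) / (Kseq k (n + 1) : ℝ) < (ρ (cylinder W k n w)).toReal := by
  haveI := hprob
  intro n w hw w' hw'
  have hK1 : (0:ℝ) < (Kseq k (n+1) : ℝ) := by exact_mod_cast Kseq_pos hW.two_le (n+1)
  have hK2 : (0:ℝ) < (Kseq k (n+2) : ℝ) := by exact_mod_cast Kseq_pos hW.two_le (n+2)
  have hsum : ∀ m : ℕ, ∑ u ∈ (hW.finite m).toFinset, (ρ (cylinder W k m u)).toReal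
      = 1 / (Kseq k m : ℝ) := by
    intro m
    have h := sum_cyl hW ρ hinv hsupp m
    have hKm : (0:ℝ) < (Kseq k m : ℝ) := by exact_mod_cast Kseq_pos hW.two_le m
    have h2 : ((∑ u ∈ (hW.finite m).toFinset,
        (Kseq k m : ENNReal) * ρ (cylinder W k m u))).toReal = 1 := by rw [h]; simp
    rw [ENNReal.toReal_sum (fun u _ =>
      ENNReal.mul_ne_top (ENNReal.natCast_ne_top _) (measure_ne_top ρ _))] at h2
    simp only [ENNReal.toReal_mul] at h2
    have e : ((Kseq k m : ENNReal)).toReal = (Kseq k m : ℝ) := by simp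
    rw [e, ← Finset.mul_sum] at h2
    field_simp
    linarith [h2]
  have hdec : ∀ (m : ℕ) (u : List α), u ∈ W m →
      (ρ (cylinder W k m u)).toReal = ∑ v ∈ (hW.finite (m+1)).toFinset,
        ((alignedOcc k m u v).card : ℝ) * (ρ (cylinder W k (m+1) v)).toReal := by
    intro m u hu
    have h := congrArg ENNReal.toReal (cyl_decomp hW ρ hinv m u hu)
    rw [ENNReal.toReal_sum (fun v _ =>
      ENNReal.mul_ne_top (ENNReal.natCast_ne_top _) (measure_ne_top ρ _))] at h
    simpa [ENNReal.toReal_mul] using h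
  have hnn : ∀ (m : ℕ) (u : List α), 0 ≤ (ρ (cylinder W k m u)).toReal :=
    fun m u => ENNReal.toReal_nonneg
  constructor
  · -- upper bound
    have hδ := hswp (n+1)
    set S : Set ℝ := {r : ℝ | ∃ u ∈ W (n+1), ∃ v' ∈ W (n+1+1), r = Freq k (n+1) (n+1+1) u v'}
      with hS
    have hbdd : BddAbove S := by
      apply Set.Finite.bddAbove
      have hsub : S ⊆ (fun q : List α × List α =>
          Freq k (n+1) (n+1+1) q.1 q.2) '' ((W (n+1)) ×ˢ (W (n+1+1))) := by
        rintro r ⟨u, hu, v', hv', rfl⟩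
        exact ⟨(u, v'), ⟨hu, hv'⟩, rfl⟩
      exact (((hW.finite (n+1)).prod (hW.finite (n+1+1))).image _).subset hsub
    have hocc_lt : ∀ v ∈ (hW.finite (n+2)).toFinset,
        (occCount w' v : ℝ) < δ (n+1) * ((Kseq k (n+2):ℝ) / (Kseq k (n+1):ℝ)) := by
      intro v hv
      have hvW : v ∈ W (n+2) := (hW.finite (n+2)).mem_toFinset.mp hv
      have hmem : Freq k (n+1) (n+1+1) w' v ∈ S := ⟨w', hw', v, hvW, rfl⟩
      have hle : Freq k (n+1) (n+1+1) w' v ≤ maxFreq k W (n+1) := le_csSup hbdd hmem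
      have hlt : Freq k (n+1) (n+1+1) w' v < δ (n+1) := lt_of_le_of_lt hle hδ
      rw [Freq] at hlt
      have hratio : (0:ℝ) < (Kseq k (n+1+1):ℝ) / (Kseq k (n+1):ℝ) := by positivity
      rw [div_lt_iff₀ hratio] at hlt
      linarith
    set F2 := (hW.finite (n+2)).toFinset with hF2
    have hF2ne : F2.Nonempty := by
      obtain ⟨v0, hv0⟩ := hW.nonempty (n+2)
      exact ⟨v0, (hW.finite _).mem_toFinset.mpr hv0⟩
    set A : ℕ := F2.sup (fun v => (alignedOcc k (n+1) w' v).card) with hAdef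
    obtain ⟨v₀, hv₀, hA⟩ := F2.exists_mem_eq_sup hF2ne
      (fun v => (alignedOcc k (n+1) w' v).card)
    have hAlt : (A:ℝ) < δ (n+1) * ((Kseq k (n+2):ℝ)/(Kseq k (n+1):ℝ)) := by
      rw [hAdef, hA]
      calc ((alignedOcc k (n+1) w' v₀).card : ℝ) ≤ (occCount w' v₀ : ℝ) := by
            exact_mod_cast alignedOcc_card_le_occCount k (n+1) w' v₀
        _ < _ := hocc_lt v₀ hv₀
    have hupper : (ρ (cylinder W k (n+1) w')).toReal ≤ (A:ℝ) * (1/(Kseq k (n+2):ℝ)) := by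
      rw [hdec (n+1) w' hw']
      calc ∑ v ∈ F2, ((alignedOcc k (n+1) w' v).card : ℝ) * (ρ (cylinder W k (n+2) v)).toReal
          ≤ ∑ v ∈ F2, (A:ℝ) * (ρ (cylinder W k (n+2) v)).toReal := by
            refine Finset.sum_le_sum fun v hv => ?_
            refine mul_le_mul_of_nonneg_right ?_ (hnn _ _)
            exact_mod_cast Finset.le_sup (f := fun v => (alignedOcc k (n+1) w' v).card) hv
        _ = (A:ℝ) * ∑ v ∈ F2, (ρ (cylinder W k (n+2) v)).toReal := by rw [Finset.mul_sum]
        _ = (A:ℝ) * (1/(Kseq k (n+2):ℝ)) := by rw [hF2, hsum (n+2)]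
    calc (ρ (cylinder W k (n+1) w')).toReal ≤ (A:ℝ) * (1/(Kseq k (n+2):ℝ)) := hupper
      _ < (δ (n+1) * ((Kseq k (n+2):ℝ)/(Kseq k (n+1):ℝ))) * (1/(Kseq k (n+2):ℝ)) :=
          mul_lt_mul_of_pos_right hAlt (by positivity)
      _ = δ (n+1) / (Kseq k (n+1):ℝ) := by field_simp
  · -- lower bound
    have hlow : 1/(Kseq k (n+1):ℝ) ≤ (ρ (cylinder W k n w)).toReal := by
      rw [hdec n w hw, ← hsum (n+1)]
      refine Finset.sum_le_sum fun v hv => ?_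
      have h1 : 1 ≤ (alignedOcc k n w v).card :=
        one_le_alignedOcc_card hW hw ((hW.finite _).mem_toFinset.mp hv)
      calc (ρ (cylinder W k (n+1) v)).toReal
          = 1 * (ρ (cylinder W k (n+1) v)).toReal := (one_mul _).symm
        _ ≤ ((alignedOcc k n w v).card : ℝ) * (ρ (cylinder W k (n+1) v)).toReal :=
            mul_le_mul_of_nonneg_right (by exact_mod_cast h1) (hnn _ _)
    have hstep : δ (n+1) / (Kseq k (n+1):ℝ) < 1 / (Kseq k (n+1):ℝ) := by
      gcongr
      · exact hδ1 (n+1)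
    linarith

end OdoPaper
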